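/- Let G be a totally disconnected locally compact group. The function d(U,V) = log([U : U ∩ V] · [V : U ∩ V]) defines a metric on the set COS(G) of compact open subgroups of G, and every topological group automorphism of G acts by isometries on (COS(G), d). -/

import Mathlib

/-- The distance `d(U,V) = log([U : U ∩ V] · [V : U ∩ V])` between two subgroups. -/
noncomputable def cosDist {G : Type*} [Group G] (U W : Subgroup G) : ℝ :=
  Real.log ((W.relIndex U * U.relIndex W : ℕ) : ℝ)

section Aux

variable {G : Type*} [Group G] [TopologicalSpace G] [IsTopologicalGroup G]

/-- If `U` is compact and `W` is open, the relative index `[U : U ∩ W]` is nonzero. -/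
lemma relindex_ne_zero_of_isCompact_of_isOpen (U W : Subgroup G)
    (hUc : IsCompact (U : Set G)) (hWo : IsOpen (W : Set G)) : W.relIndex U ≠ 0 := by
  have : CompactSpace U := isCompact_iff_compactSpace.mp hUc
  have hopen : IsOpen ((W.subgroupOf U : Subgroup U) : Set U) := by
    have h : ((W.subgroupOf U : Subgroup U) : Set U) = ((↑) : U → G) ⁻¹' W := rfl
    rw [h]
    exact hWo.preimage continuous_subtype_val
  have := Subgroup.quotient_finite_of_isOpen (W.subgroupOf U) hopen
  exact Subgroup.index_ne_zero_of_finite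

/-- Key submultiplicativity: `[U : U ∩ X] ≤ [U : U ∩ W] · [W : W ∩ X]`. -/
lemma relindex_triangle (U W X : Subgroup G)
    (hUc : IsCompact (U : Set G))
    (hWc : IsCompact (W : Set G)) (hWo : IsOpen (W : Set G))
    (hXo : IsOpen (X : Set G)) :
    X.relIndex U ≤ W.relIndex U * X.relIndex W := by
  have hXWU : (X ⊓ W).relIndex U ≠ 0 :=
    relindex_ne_zero_of_isCompact_of_isOpen U (X ⊓ W) hUc
      ((Subgroup.coe_inf X W ▸ hXo.inter hWo))
  have h1 : X.relIndex U ≤ (X ⊓ W).relIndex U :=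
    Subgroup.relIndex_le_of_le_left inf_le_left hXWU
  have h2 : X.relIndex (W ⊓ U) * W.relIndex U = (X ⊓ W).relIndex U :=
    Subgroup.relIndex_inf_mul_relIndex X W U
  have hXW : X.relIndex W ≠ 0 :=
    relindex_ne_zero_of_isCompact_of_isOpen W X hWc hXo
  have h3 : X.relIndex (W ⊓ U) ≤ X.relIndex W :=
    Subgroup.relIndex_le_of_le_right inf_le_left hXW
  calc X.relIndex U ≤ (X ⊓ W).relIndex U := h1
    _ = X.relIndex (W ⊓ U) * W.relIndex U := h2.symm
    _ ≤ X.relIndex W * W.relIndex U := Nat.mul_le_mul_right _ h3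
    _ = W.relIndex U * X.relIndex W := Nat.mul_comm _ _

end Aux

/-- Let `G` be a t.d.l.c. group.  Then
`d(U,V) = log([U : U ∩ V][V : U ∩ V])` is a metric on the set of compact open subgroups of
`G` (it vanishes exactly on the diagonal, is symmetric, and satisfies the triangle
inequality), and every topological group automorphism of `G` acts on the compact open
subgroups by isometries. -/
theorem cosDist_is_metric_and_aut_isometric {G : Type*} [Group G] [TopologicalSpace G]
    [IsTopologicalGroup G] [T2Space G] [LocallyCompactSpace G] [TotallyDisconnectedSpace G] :
    (∀ U W : Subgroup G, IsCompact (U : Set G) → IsOpen (U : Set G) →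
      IsCompact (W : Set G) → IsOpen (W : Set G) →
        (0 ≤ cosDist U W ∧ cosDist U W = cosDist W U ∧ (cosDist U W = 0 ↔ U = W))) ∧
    (∀ U W X : Subgroup G, IsCompact (U : Set G) → IsOpen (U : Set G) →
      IsCompact (W : Set G) → IsOpen (W : Set G) →
      IsCompact (X : Set G) → IsOpen (X : Set G) →
        cosDist U X ≤ cosDist U W + cosDist W X) ∧
    (∀ α : G ≃* G, Continuous ⇑α → Continuous ⇑α.symm →
      ∀ U W : Subgroup G, IsCompact (U : Set G) → IsOpen (U : Set G) →
        IsCompact (W : Set G) → IsOpen (W : Set G) →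
          IsCompact ((U.map α.toMonoidHom : Subgroup G) : Set G) ∧
          IsOpen ((U.map α.toMonoidHom : Subgroup G) : Set G) ∧
          cosDist (U.map α.toMonoidHom) (W.map α.toMonoidHom) = cosDist U W) := by
  refine ⟨?_, ?_, ?_⟩
  · intro U W hUc hUo hWc hWo
    have h1 : W.relIndex U ≠ 0 := relindex_ne_zero_of_isCompact_of_isOpen U W hUc hWo
    have h2 : U.relIndex W ≠ 0 := relindex_ne_zero_of_isCompact_of_isOpen W U hWc hUo
    have hpos : 1 ≤ W.relIndex U * U.relIndex W :=
      Nat.one_le_iff_ne_zero.mpr (Nat.mul_ne_zero h1 h2)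
    have hpos' : (1 : ℝ) ≤ ((W.relIndex U * U.relIndex W : ℕ) : ℝ) := by
      exact_mod_cast hpos
    refine ⟨Real.log_nonneg hpos', ?_, ?_⟩
    · unfold cosDist
      rw [Nat.mul_comm]
    · constructor
      · intro h
        have := Real.log_eq_zero.mp h
        have hone : ((W.relIndex U * U.relIndex W : ℕ) : ℝ) = 1 := by
          rcases this with h | h | h
          · exact absurd h (by positivity)
          · exact h
          · linarith
        have hone' : W.relIndex U * U.relIndex W = 1 := by exact_mod_cast hone
        have ha := Nat.eq_one_of_mul_eq_one_right hone'
        have hb := Nat.eq_one_of_mul_eq_one_left hone'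
        exact le_antisymm (Subgroup.relIndex_eq_one.mp ha) (Subgroup.relIndex_eq_one.mp hb)
      · rintro rfl
        unfold cosDist
        rw [Subgroup.relIndex_self]
        norm_num
  · intro U W X hUc hUo hWc hWo hXc hXo
    have hXU : X.relIndex U ≤ W.relIndex U * X.relIndex W :=
      relindex_triangle U W X hUc hWc hWo hXo
    have hUX : U.relIndex X ≤ W.relIndex X * U.relIndex W := by
      have := relindex_triangle X W U hXc hWc hWo hUo
      omega
    have hWU : W.relIndex U ≠ 0 := relindex_ne_zero_of_isCompact_of_isOpen U W hUc hWo
    have hUW : U.relIndex W ≠ 0 := relindex_ne_zero_of_isCompact_of_isOpen W U hWc hUo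
    have hXW : X.relIndex W ≠ 0 := relindex_ne_zero_of_isCompact_of_isOpen W X hWc hXo
    have hWX : W.relIndex X ≠ 0 := relindex_ne_zero_of_isCompact_of_isOpen X W hXc hWo
    have hXU0 : X.relIndex U ≠ 0 := relindex_ne_zero_of_isCompact_of_isOpen U X hUc hXo
    have hUX0 : U.relIndex X ≠ 0 := relindex_ne_zero_of_isCompact_of_isOpen X U hXc hUo
    have hmul : X.relIndex U * U.relIndex X ≤
        (W.relIndex U * U.relIndex W) * (X.relIndex W * W.relIndex X) := by
      calc X.relIndex U * U.relIndex X
          ≤ (W.relIndex U * X.relIndex W) * (W.relIndex X * U.relIndex W) :=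
            Nat.mul_le_mul hXU hUX
        _ = (W.relIndex U * U.relIndex W) * (X.relIndex W * W.relIndex X) := by ring
    unfold cosDist
    rw [← Real.log_mul (by positivity) (by positivity)]
    apply Real.log_le_log (by positivity)
    push_cast
    exact_mod_cast hmul
  · intro α hα hαs U W hUc hUo hWc hWo
    have himg : ∀ V : Subgroup G, ((V.map α.toMonoidHom : Subgroup G) : Set G) = ⇑α '' V := by
      intro V; rfl
    have himg' : (⇑α '' (U : Set G)) = ⇑α.symm ⁻¹' (U : Set G) := by
      ext x
      constructor
      · rintro ⟨y, hy, rfl⟩; simpa using hy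
      · intro hx; exact ⟨α.symm x, hx, by simp⟩
    refine ⟨?_, ?_, ?_⟩
    · rw [himg]; exact hUc.image hα
    · rw [himg, himg']; exact hUo.preimage hαs
    · have key : ∀ A B : Subgroup G,
          (A.map α.toMonoidHom).relIndex (B.map α.toMonoidHom) = A.relIndex B := by
        intro A B
        rw [Subgroup.map_equiv_eq_comap_symm' α A, Subgroup.map_equiv_eq_comap_symm' α B,
          Subgroup.relIndex_comap,
          Subgroup.map_comap_eq_self_of_surjective α.symm.surjective]
      unfold cosDist
      rw [key, key]
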